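/- Let n ≥ 3, a < (n-2)/2, and assume either (a < 0 and a < b < a+1) or (0 ≤ a ≤ b < a+1); let p = 2n/(n-2+2(b-a)), ν > 0, α, β > 1 with α + β = p. Suppose S > 0 is a constant such that for every C¹ function w : ℝⁿ → ℝ with ∫_{ℝⁿ}|x|^{-2a}|∇w|² dx < ∞ and ∫_{ℝⁿ}|x|^{-bp}|w|^p dx < ∞ one has (∫_{ℝⁿ}|x|^{-bp}|w|^p dx)^{2/p} ≤ S ∫_{ℝⁿ}|x|^{-2a}|∇w|² dx. Let m be the infimum of f(x,y) = (x² + y²)/(x^p + y^p + pν x^α y^β)^{2/p} over all x ≥ 0, y ≥ 0 with x + y = 1. Then for every pair of C¹ functions u, v : ℝⁿ → ℝ with finite weighted energies ∫|x|^{-2a}|∇u|², ∫|x|^{-2a}|∇v|² < ∞ and ∫|x|^{-bp}|u|^p, ∫|x|^{-bp}|v|^p < ∞, the vector-valued Caffarelli–Kohn–Nirenberg inequality holds: (m/S)·(∫_{ℝⁿ}|x|^{-bp}(|u|^p + |v|^p + pν|u|^α|v|^β) dx)^{2/p} ≤ ∫_{ℝⁿ}|x|^{-2a}(|∇u|² +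 |∇v|²) dx. -/

import Mathlib

open MeasureTheory Real Filter Topology

noncomputable section

lemma key_m (p ν α β : ℝ) (hν : 0 < ν) (hα : 1 < α) (hβ : 1 < β) (hαβ : α + β = p)
    (m : ℝ)
    (hm : m = sInf {z : ℝ | ∃ x y : ℝ, 0 ≤ x ∧ 0 ≤ y ∧ x + y = 1 ∧
      z = (x^2 + y^2) / ((x ^ p + y ^ p + p*ν * x ^ α * y ^ β) ^ (2/p))}) :
    (0 ≤ m) ∧ ∀ x y : ℝ, 0 ≤ x → 0 ≤ y →
      m * ((x ^ p + y ^ p + p*ν * x ^ α * y ^ β) ^ (2/p)) ≤ x^2 + y^2 := by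
  have hp : 0 < p := by linarith
  set s : Set ℝ := {z : ℝ | ∃ x y : ℝ, 0 ≤ x ∧ 0 ≤ y ∧ x + y = 1 ∧
      z = (x^2 + y^2) / ((x ^ p + y ^ p + p*ν * x ^ α * y ^ β) ^ (2/p))} with hs
  have hset : ∀ z ∈ s, (0:ℝ) ≤ z := by
    rintro z ⟨x, y, hx, hy, hxy, rfl⟩
    have hb : 0 ≤ x ^ p + y ^ p + p*ν * x ^ α * y ^ β :=
      add_nonneg (add_nonneg (Real.rpow_nonneg hx p) (Real.rpow_nonneg hy p))
        (mul_nonneg (mul_nonneg (by positivity) (Real.rpow_nonneg hx α)) (Real.rpow_nonneg hy β))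
    exact div_nonneg (by positivity) (Real.rpow_nonneg hb _)
  have hm0 : 0 ≤ m := hm ▸ Real.sInf_nonneg hset
  have hbdd : BddBelow s := ⟨0, fun z hz => hset z hz⟩
  refine ⟨hm0, fun x y hx hy => ?_⟩
  by_cases h0 : x + y = 0
  · have hx0 : x = 0 := by linarith [hx, hy]
    have hy0 : y = 0 := by linarith [hx, hy]
    subst hx0; subst hy0
    rw [Real.zero_rpow hp.ne', Real.zero_rpow (by linarith : α ≠ 0)]
    norm_num
    rw [Real.zero_rpow (by positivity : 2/p ≠ 0)]
    simp
  · have ht : 0 < x + y := lt_of_le_of_ne (by linarith) (Ne.symm h0)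
    set t := x + y with htdef
    set x' := x / t with hx'def
    set y' := y / t with hy'def
    have hx' : 0 ≤ x' := div_nonneg hx ht.le
    have hy' : 0 ≤ y' := div_nonneg hy ht.le
    have hxy' : x' + y' = 1 := by rw [hx'def, hy'def, ← add_div, ← htdef, div_self ht.ne']
    have hmem : (x'^2 + y'^2) / ((x' ^ p + y' ^ p + p*ν * x' ^ α * y' ^ β) ^ (2/p)) ∈ s :=
      ⟨x', y', hx', hy', hxy', rfl⟩
    have hmle : m ≤ (x'^2 + y'^2) / ((x' ^ p + y' ^ p + p*ν * x' ^ α * y' ^ β) ^ (2/p)) :=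
      hm ▸ csInf_le hbdd hmem
    have hA' : 0 < x' ^ p + y' ^ p + p*ν * x' ^ α * y' ^ β := by
      rcases lt_or_ge 0 x' with hx'' | hx''
      · have h1 : 0 < x' ^ p := Real.rpow_pos_of_pos hx'' p
        have h2 : 0 ≤ y' ^ p := Real.rpow_nonneg hy' p
        have h3 : 0 ≤ p*ν * x' ^ α * y' ^ β :=
          mul_nonneg (mul_nonneg (by positivity) (Real.rpow_nonneg hx' α)) (Real.rpow_nonneg hy' β)
        linarith
      · have hx0 : x' = 0 := le_antisymm hx'' hx'
        have hy1 : y' = 1 := by linarith [hxy']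
        rw [hx0, hy1]
        rw [Real.zero_rpow hp.ne', Real.zero_rpow (by linarith : α ≠ 0)]
        norm_num
    have hApow : 0 < (x' ^ p + y' ^ p + p*ν * x' ^ α * y' ^ β) ^ (2/p) :=
      Real.rpow_pos_of_pos hA' _
    have h1 : m * ((x' ^ p + y' ^ p + p*ν * x' ^ α * y' ^ β) ^ (2/p)) ≤ x'^2 + y'^2 := by
      rw [le_div_iff₀ hApow] at hmle
      linarith
    have hxeq : x = t * x' := by rw [hx'def, mul_comm, div_mul_cancel₀ x ht.ne']
    have hyeq : y = t * y' := by rw [hy'def, mul_comm, div_mul_cancel₀ y ht.ne']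
    have hbase : x ^ p + y ^ p + p*ν * x ^ α * y ^ β
        = t ^ p * (x' ^ p + y' ^ p + p*ν * x' ^ α * y' ^ β) := by
      rw [hxeq, hyeq, Real.mul_rpow ht.le hx', Real.mul_rpow ht.le hy',
        Real.mul_rpow ht.le hx', Real.mul_rpow ht.le hy']
      have htab : t ^ α * t ^ β = t ^ p := by
        rw [← Real.rpow_add ht, hαβ]
      linear_combination (p*ν*(x' ^ α)*(y' ^ β)) * htab
    have hpow : (t ^ p * (x' ^ p + y' ^ p + p*ν * x' ^ α * y' ^ β)) ^ (2/p)
        = t^2 * (x' ^ p + y' ^ p + p*ν * x' ^ α * y' ^ β) ^ (2/p) := by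
      rw [Real.mul_rpow (Real.rpow_nonneg ht.le p) hA'.le, ← Real.rpow_natCast t 2,
        ← Real.rpow_mul ht.le]
      congr 1
      field_simp
      norm_num
    rw [hbase, hpow, hxeq, hyeq]
    calc m * (t ^ 2 * (x' ^ p + y' ^ p + p*ν * x' ^ α * y' ^ β) ^ (2/p))
        = t^2 * (m * (x' ^ p + y' ^ p + p*ν * x' ^ α * y' ^ β) ^ (2/p)) := by ring
      _ ≤ t^2 * (x'^2 + y'^2) := by
          apply mul_le_mul_of_nonneg_left h1 (by positivity)
      _ = (t*x')^2 + (t*y')^2 := by ring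

lemma int_combine {Ω : Type*} [MeasurableSpace Ω] {μ : Measure Ω} (p ν α β : ℝ)
    (hν : 0 < ν) (hα : 1 < α) (hβ : 1 < β) (hαβ : α + β = p)
    (w f g : Ω → ℝ) (hw : ∀ x, 0 ≤ w x) (hf : ∀ x, 0 ≤ f x) (hg : ∀ x, 0 ≤ g x)
    (hmeas : AEStronglyMeasurable (fun x => w x * (f x ^ α * g x ^ β)) μ)
    (hIf : Integrable (fun x => w x * f x ^ p) μ)
    (hIg : Integrable (fun x => w x * g x ^ p) μ) :
    (∫ x, w x * (f x ^ p + g x ^ p + p*ν * f x ^ α * g x ^ β) ∂μ) ≤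
      (∫ x, w x * f x ^ p ∂μ) + (∫ x, w x * g x ^ p ∂μ) +
        p*ν * ((∫ x, w x * f x ^ p ∂μ) ^ (α/p) * (∫ x, w x * g x ^ p ∂μ) ^ (β/p)) := by
  have hp : 0 < p := by linarith
  have hαp : 0 < α := by linarith
  have hβp : 0 < β := by linarith
  have hα0 : α ≠ 0 := hαp.ne'
  have hβ0 : β ≠ 0 := hβp.ne'
  have hp0 : p ≠ 0 := hp.ne'
  have hpq : (p/α).HolderConjugate (p/β) := by
    refine Real.holderConjugate_iff.mpr ⟨?_, ?_⟩
    · rw [lt_div_iff₀ hαp]; linarith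
    · rw [inv_div, inv_div, ← add_div, hαβ, div_self hp0]
  have hF0 : ∀ x, 0 ≤ w x * f x ^ p := fun x => mul_nonneg (hw x) (Real.rpow_nonneg (hf x) _)
  have hG0 : ∀ x, 0 ≤ w x * g x ^ p := fun x => mul_nonneg (hw x) (Real.rpow_nonneg (hg x) _)
  have hC0 : ∀ x, 0 ≤ w x * (f x ^ α * g x ^ β) := fun x =>
    mul_nonneg (hw x) (mul_nonneg (Real.rpow_nonneg (hf x) _) (Real.rpow_nonneg (hg x) _))
  have hCint : Integrable (fun x => w x * (f x ^ α * g x ^ β)) μ := by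
    refine (hIf.add hIg).mono' hmeas (ae_of_all _ fun x => ?_)
    rw [Real.norm_of_nonneg (hC0 x)]
    have hyoung := Real.young_inequality_of_nonneg (Real.rpow_nonneg (hf x) α)
      (Real.rpow_nonneg (hg x) β) hpq
    have e1 : (f x ^ α) ^ (p/α) = f x ^ p := by
      rw [← Real.rpow_mul (hf x)]; congr 1; field_simp
    have e2 : (g x ^ β) ^ (p/β) = g x ^ p := by
      rw [← Real.rpow_mul (hg x)]; congr 1; field_simp
    rw [e1, e2] at hyoung
    have d1 : f x ^ p / (p/α) ≤ f x ^ p := div_le_self (Real.rpow_nonneg (hf x) _) (Real.holderConjugate_iff.mp hpq).1.le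
    have d2 : g x ^ p / (p/β) ≤ g x ^ p := div_le_self (Real.rpow_nonneg (hg x) _)
      (Real.holderConjugate_iff.mp hpq.symm).1.le
    have hy : f x ^ α * g x ^ β ≤ f x ^ p + g x ^ p := by linarith
    calc w x * (f x ^ α * g x ^ β) ≤ w x * (f x ^ p + g x ^ p) :=
          mul_le_mul_of_nonneg_left hy (hw x)
      _ = w x * f x ^ p + w x * g x ^ p := by ring
  -- Memℒp facts
  have hmemF : MemLp (fun x => (w x * f x ^ p) ^ (α/p)) (ENNReal.ofReal (p/α)) μ := by
    have h := (memLp_one_iff_integrable.mpr hIf).norm_rpow_div (ENNReal.ofReal (α/p))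
    rw [ENNReal.toReal_ofReal (by positivity)] at h
    have heq : (fun x => ‖w x * f x ^ p‖ ^ (α/p)) = (fun x => (w x * f x ^ p) ^ (α/p)) :=
      funext fun x => by rw [Real.norm_of_nonneg (hF0 x)]
    rw [heq] at h
    convert h using 2
    rw [one_div, ← ENNReal.ofReal_inv_of_pos (by positivity), inv_div]
  have hmemG : MemLp (fun x => (w x * g x ^ p) ^ (β/p)) (ENNReal.ofReal (p/β)) μ := by
    have h := (memLp_one_iff_integrable.mpr hIg).norm_rpow_div (ENNReal.ofReal (β/p))
    rw [ENNReal.toReal_ofReal (by positivity)] at h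
    have heq : (fun x => ‖w x * g x ^ p‖ ^ (β/p)) = (fun x => (w x * g x ^ p) ^ (β/p)) :=
      funext fun x => by rw [Real.norm_of_nonneg (hG0 x)]
    rw [heq] at h
    convert h using 2
    rw [one_div, ← ENNReal.ofReal_inv_of_pos (by positivity), inv_div]
  -- Hölder
  have hHolder : ∫ x, w x * (f x ^ α * g x ^ β) ∂μ ≤
      (∫ x, w x * f x ^ p ∂μ) ^ (α/p) * (∫ x, w x * g x ^ p ∂μ) ^ (β/p) := by
    have h := integral_mul_le_Lp_mul_Lq_of_nonneg hpq
      (ae_of_all _ fun x => Real.rpow_nonneg (hF0 x) (α/p))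
      (ae_of_all _ fun x => Real.rpow_nonneg (hG0 x) (β/p)) hmemF hmemG
    have e3 : ∀ x : Ω, ((w x * f x ^ p) ^ (α/p)) ^ (p/α) = w x * f x ^ p := fun x => by
      rw [← Real.rpow_mul (hF0 x)]
      rw [show α/p * (p/α) = 1 by field_simp, Real.rpow_one]
    have e4 : ∀ x : Ω, ((w x * g x ^ p) ^ (β/p)) ^ (p/β) = w x * g x ^ p := fun x => by
      rw [← Real.rpow_mul (hG0 x)]
      rw [show β/p * (p/β) = 1 by field_simp, Real.rpow_one]
    have e5 : ∀ x : Ω, (w x * f x ^ p) ^ (α/p) * (w x * g x ^ p) ^ (β/p)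
        = w x * (f x ^ α * g x ^ β) := fun x => by
      rw [Real.mul_rpow (hw x) (Real.rpow_nonneg (hf x) _),
        Real.mul_rpow (hw x) (Real.rpow_nonneg (hg x) _),
        ← Real.rpow_mul (hf x), ← Real.rpow_mul (hg x),
        show p * (α/p) = α by field_simp, show p * (β/p) = β by field_simp]
      have hwa : w x ^ (α/p) * w x ^ (β/p) = w x := by
        rw [← Real.rpow_add_of_nonneg (hw x) (by positivity) (by positivity),
          show α/p + β/p = 1 by rw [← add_div, hαβ, div_self hp0], Real.rpow_one]
      calc (w x ^ (α/p) * f x ^ α) * (w x ^ (β/p) * g x ^ β)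
          = (w x ^ (α/p) * w x ^ (β/p)) * (f x ^ α * g x ^ β) := by ring
        _ = w x * (f x ^ α * g x ^ β) := by rw [hwa]
    simp only [e3, e4, e5] at h
    rwa [one_div_div, one_div_div] at h
  rw [show (fun x => w x * (f x ^ p + g x ^ p + p*ν * f x ^ α * g x ^ β))
      = (fun x => (w x * f x ^ p + w x * g x ^ p) + (p*ν) * (w x * (f x ^ α * g x ^ β)))
    from funext fun x => by ring]
  have hfg : Integrable (fun x => w x * f x ^ p + w x * g x ^ p) μ := hIf.add hIg
  rw [integral_add hfg (hCint.const_mul _), integral_add hIf hIg, integral_const_mul]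
  have := mul_le_mul_of_nonneg_left hHolder (show (0:ℝ) ≤ p*ν by positivity)
  linarith

lemma arith_final (p ν α β : ℝ) (hν : 0 < ν) (hα : 1 < α) (hβ : 1 < β) (hαβ : α + β = p)
    (m S X Y T Eu Ev : ℝ) (hS : 0 < S) (hm0 : 0 ≤ m)
    (hkey : ∀ x y : ℝ, 0 ≤ x → 0 ≤ y →
      m * ((x ^ p + y ^ p + p*ν * x ^ α * y ^ β) ^ (2/p)) ≤ x^2 + y^2)
    (hX0 : 0 ≤ X) (hY0 : 0 ≤ Y) (hT0 : 0 ≤ T)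
    (hT : T ≤ X + Y + p*ν * (X ^ (α/p) * Y ^ (β/p)))
    (h1 : X ^ (2/p) ≤ S * Eu) (h2 : Y ^ (2/p) ≤ S * Ev) :
    (m/S) * T ^ (2/p) ≤ Eu + Ev := by
  have hp : 0 < p := by linarith
  set x0 := X ^ (1/p) with hx0
  set y0 := Y ^ (1/p) with hy0
  have hx00 : 0 ≤ x0 := Real.rpow_nonneg hX0 _
  have hy00 : 0 ≤ y0 := Real.rpow_nonneg hY0 _
  have ex : ∀ r : ℝ, x0 ^ r = X ^ (r/p) := fun r => by
    rw [hx0, ← Real.rpow_mul hX0, one_div, inv_mul_eq_div]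
  have ey : ∀ r : ℝ, y0 ^ r = Y ^ (r/p) := fun r => by
    rw [hy0, ← Real.rpow_mul hY0, one_div, inv_mul_eq_div]
  have hxp : x0 ^ p = X := by rw [ex p, div_self hp.ne', Real.rpow_one]
  have hyp : y0 ^ p = Y := by rw [ey p, div_self hp.ne', Real.rpow_one]
  have hD : X + Y + p*ν * (X ^ (α/p) * Y ^ (β/p)) = x0 ^ p + y0 ^ p + p*ν * x0 ^ α * y0 ^ β := by
    rw [hxp, hyp, ex α, ey β]; ring
  have h3 : m * T ^ (2/p) ≤ m * ((x0 ^ p + y0 ^ p + p*ν * x0 ^ α * y0 ^ β) ^ (2/p)) := by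
    apply mul_le_mul_of_nonneg_left _ hm0
    apply Real.rpow_le_rpow hT0 _ (by positivity)
    rw [← hD]; exact hT
  have h4 := hkey x0 y0 hx00 hy00
  have e2x : x0^2 = X ^ (2/p) := by
    rw [← Real.rpow_natCast x0 2, Nat.cast_ofNat, ex 2]
  have e2y : y0^2 = Y ^ (2/p) := by
    rw [← Real.rpow_natCast y0 2, Nat.cast_ofNat, ey 2]
  rw [div_mul_eq_mul_div, div_le_iff₀ hS]
  calc m * T ^ (2/p) ≤ m * ((x0 ^ p + y0 ^ p + p*ν * x0 ^ α * y0 ^ β) ^ (2/p)) := h3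
    _ ≤ x0^2 + y0^2 := h4
    _ = X ^ (2/p) + Y ^ (2/p) := by rw [e2x, e2y]
    _ ≤ S * Eu + S * Ev := add_le_add h1 h2
    _ = (Eu + Ev) * S := by ring

/-- Coordinate Laplacian on Euclidean space. -/
def lapl {n : ℕ} (w : EuclideanSpace ℝ (Fin n) → ℝ) (x : EuclideanSpace ℝ (Fin n)) : ℝ :=
  ∑ i : Fin n, fderiv ℝ (fun y => fderiv ℝ w y (EuclideanSpace.single i 1)) x
    (EuclideanSpace.single i 1)

/-- The weighted divergence `div(|x|^(-2a) ∇w)(x) = |x|^(-2a) (Δw(x) - 2a⟨x,∇w(x)⟩/|x|²)`. -/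
def wdiv {n : ℕ} (a : ℝ) (w : EuclideanSpace ℝ (Fin n) → ℝ) (x : EuclideanSpace ℝ (Fin n)) : ℝ :=
  ‖x‖ ^ (-(2*a)) * (lapl w x - 2*a * (@inner ℝ _ _ x (gradient w x)) / ‖x‖^2)

/-- Finiteness of the weighted Dirichlet energy `∫ |x|^(-2a) |∇w|² < ∞`. -/
def finiteEnergy {n : ℕ} (a : ℝ) (w : EuclideanSpace ℝ (Fin n) → ℝ) : Prop :=
  Integrable (fun x : EuclideanSpace ℝ (Fin n) => ‖x‖ ^ (-(2*a)) * ‖gradient w x‖^2)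

theorem stmt {n : ℕ} (hn : 3 ≤ n) (a b p ν α β : ℝ)
    (ha : a < ((n:ℝ)-2)/2)
    (hcase : (a < 0 ∧ a < b ∧ b < a + 1) ∨ (0 ≤ a ∧ a ≤ b ∧ b < a + 1))
    (hp : p = 2*(n:ℝ)/((n:ℝ)-2+2*(b-a))) (hν : 0 < ν) (hα : 1 < α) (hβ : 1 < β)
    (hαβ : α + β = p)
    (S : ℝ) (hS : 0 < S)
    (hCKN : ∀ w : EuclideanSpace ℝ (Fin n) → ℝ, ContDiff ℝ 1 w →
      Integrable (fun x : EuclideanSpace ℝ (Fin n) => ‖x‖ ^ (-(2*a)) * ‖gradient w x‖^2) →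
      Integrable (fun x : EuclideanSpace ℝ (Fin n) => ‖x‖ ^ (-(b*p)) * |w x| ^ p) →
      (∫ x : EuclideanSpace ℝ (Fin n), ‖x‖ ^ (-(b*p)) * |w x| ^ p) ^ (2/p) ≤
        S * ∫ x : EuclideanSpace ℝ (Fin n), ‖x‖ ^ (-(2*a)) * ‖gradient w x‖^2)
    (m : ℝ)
    (hm : m = sInf {z : ℝ | ∃ x y : ℝ, 0 ≤ x ∧ 0 ≤ y ∧ x + y = 1 ∧
      z = (x^2 + y^2) / ((x ^ p + y ^ p + p*ν * x ^ α * y ^ β) ^ (2/p))}) :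
    ∀ u v : EuclideanSpace ℝ (Fin n) → ℝ, ContDiff ℝ 1 u → ContDiff ℝ 1 v →
      Integrable (fun x : EuclideanSpace ℝ (Fin n) => ‖x‖ ^ (-(2*a)) * ‖gradient u x‖^2) →
      Integrable (fun x : EuclideanSpace ℝ (Fin n) => ‖x‖ ^ (-(2*a)) * ‖gradient v x‖^2) →
      Integrable (fun x : EuclideanSpace ℝ (Fin n) => ‖x‖ ^ (-(b*p)) * |u x| ^ p) →
      Integrable (fun x : EuclideanSpace ℝ (Fin n) => ‖x‖ ^ (-(b*p)) * |v x| ^ p) →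
      (m/S) * ((∫ x : EuclideanSpace ℝ (Fin n),
          ‖x‖ ^ (-(b*p)) * (|u x| ^ p + |v x| ^ p + p*ν * |u x| ^ α * |v x| ^ β)) ^ (2/p)) ≤
        ∫ x : EuclideanSpace ℝ (Fin n), ‖x‖ ^ (-(2*a)) * (‖gradient u x‖^2 + ‖gradient v x‖^2) := by
  intro u v hu hv hEu hEv hIu hIv
  obtain ⟨hm0, hkey⟩ := key_m p ν α β hν hα hβ hαβ m hm
  have hum : Measurable u := hu.continuous.measurable
  have hvm : Measurable v := hv.continuous.measurable
  have hmeas : AEStronglyMeasurable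
      (fun x : EuclideanSpace ℝ (Fin n) => ‖x‖ ^ (-(b*p)) * (|u x| ^ α * |v x| ^ β)) volume :=
    ((measurable_norm.pow measurable_const).mul
      ((hum.abs.pow measurable_const).mul (hvm.abs.pow measurable_const))).aestronglyMeasurable
  have hcomb := int_combine (μ := (volume : Measure (EuclideanSpace ℝ (Fin n)))) p ν α β hν hα hβ
    hαβ (fun x => ‖x‖ ^ (-(b*p))) (fun x => |u x|) (fun x => |v x|)
    (fun x => Real.rpow_nonneg (norm_nonneg x) _) (fun x => abs_nonneg _) (fun x => abs_nonneg _)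
    hmeas hIu hIv
  have hT0 : 0 ≤ ∫ x : EuclideanSpace ℝ (Fin n),
      ‖x‖ ^ (-(b*p)) * (|u x| ^ p + |v x| ^ p + p*ν * |u x| ^ α * |v x| ^ β) := by
    apply integral_nonneg
    intro x
    have h1 : 0 ≤ |u x| ^ p := Real.rpow_nonneg (abs_nonneg _) _
    have h2 : 0 ≤ |v x| ^ p := Real.rpow_nonneg (abs_nonneg _) _
    have hp2 : 0 < p := by linarith
    have h3 : 0 ≤ p*ν * |u x| ^ α * |v x| ^ β :=
      mul_nonneg (mul_nonneg (mul_nonneg hp2.le hν.le)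
        (Real.rpow_nonneg (abs_nonneg (u x)) α)) (Real.rpow_nonneg (abs_nonneg (v x)) β)
    have hw : 0 ≤ ‖x‖ ^ (-(b*p)) := Real.rpow_nonneg (norm_nonneg x) _
    exact mul_nonneg hw (by linarith)
  have hX0 : 0 ≤ ∫ x : EuclideanSpace ℝ (Fin n), ‖x‖ ^ (-(b*p)) * |u x| ^ p :=
    integral_nonneg fun x => mul_nonneg (Real.rpow_nonneg (norm_nonneg x) _)
      (Real.rpow_nonneg (abs_nonneg _) _)
  have hY0 : 0 ≤ ∫ x : EuclideanSpace ℝ (Fin n), ‖x‖ ^ (-(b*p)) * |v x| ^ p :=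
    integral_nonneg fun x => mul_nonneg (Real.rpow_nonneg (norm_nonneg x) _)
      (Real.rpow_nonneg (abs_nonneg _) _)
  have hrhs : (∫ x : EuclideanSpace ℝ (Fin n),
      ‖x‖ ^ (-(2*a)) * (‖gradient u x‖^2 + ‖gradient v x‖^2))
      = (∫ x : EuclideanSpace ℝ (Fin n), ‖x‖ ^ (-(2*a)) * ‖gradient u x‖^2)
        + ∫ x : EuclideanSpace ℝ (Fin n), ‖x‖ ^ (-(2*a)) * ‖gradient v x‖^2 := by
    rw [← integral_add hEu hEv]
    congr 1
    funext x
    ring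
  rw [hrhs]
  exact arith_final p ν α β hν hα hβ hαβ m S _ _ _ _ _ hS hm0 hkey hX0 hY0 hT0 hcomb
    (hCKN u hu hEu hIu) (hCKN v hv hEv hIv)
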